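/- Minimum-time certainty-equivalent bound: in the unit-cost SSP setting with ‖V − H*‖∞ ≤ ε, model-mismatch constant δ, certainty-equivalent policy π_CE proper from x, and 2(ε + δ) < 1, the expected hitting time under π_CE satisfies E[τ] ≤ H*(x) / (1 − 2(ε + δ)). -/

import Mathlib

open MeasureTheory ProbabilityTheory Filter
open scoped ENNReal

open Classical in
/-- Bellman operator of the SSP: `(T V)(x) = inf_{u ∈ U(x)} ( f(x,u) + ∫ V(F(x,u,w)) dμ(w) )`
for nonterminal `x`, and `(T V)(t) = 0`. -/
noncomputable def bellman {X U W : Type*} [MeasurableSpace W] (μ : Measure W)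
    (t : X) (Ua : X → Set U) (f : X → U → ℝ) (F : X → U → W → X)
    (V : X → ℝ) (x : X) : ℝ :=
  if x = t then 0 else ⨅ u : Ua x, (f x (u : U) + ∫ w, V (F x (u : U) w) ∂μ)

/-- Closed-loop trajectory driven by a disturbance sequence `ω : ℕ → W`:
`x₀ = x`, `x_{k+1} = F(x_k, π(x_k), ω_k)`. -/
def traj {X U W : Type*} (F : X → U → W → X) (π : X → U) (x : X) (ω : ℕ → W) : ℕ → X
  | 0 => x
  | k + 1 => F (traj F π x ω k) (π (traj F π x ω k)) (ω k)

/-- The trajectory as a family of random variables on an abstract sample space `Ω`,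
given the disturbance random variables `ξ k : Ω → W`. -/
def trajOn {X U W Ω : Type*} (F : X → U → W → X) (π : X → U) (x : X)
    (ξ : ℕ → Ω → W) (k : ℕ) (ω : Ω) : X :=
  traj F π x (fun i => ξ i ω) k

/-- Hitting time `τ = inf { k ≥ 0 : x_k = t }` of the terminal state (`∞` if never reached),
valued in `ℝ≥0∞`. -/
noncomputable def hitTime {X Ω : Type*} (t : X) (Y : ℕ → Ω → X) (ω : Ω) : ℝ≥0∞ :=
  ⨅ (k : ℕ) (_ : Y k ω = t), (k : ℝ≥0∞)

/-- Total expected cost `J = E[ Σ_{k=0}^{τ-1} f(x_k, π(x_k)) ]` (in `ℝ≥0∞`; the stage cost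
is nonnegative). -/
noncomputable def totalCost {X U Ω : Type*} [MeasurableSpace Ω] (P : Measure Ω)
    (t : X) (f : X → U → ℝ) (π : X → U) (Y : ℕ → Ω → X) : ℝ≥0∞ :=
  ∫⁻ ω, ∑' (k : ℕ), (if (k : ℝ≥0∞) < hitTime t Y ω
    then ENNReal.ofReal (f (Y k ω) (π (Y k ω))) else 0) ∂P

/-- Expected hitting time `E[τ]` (in `ℝ≥0∞`). -/
noncomputable def expHit {X Ω : Type*} [MeasurableSpace Ω] (P : Measure Ω)
    (t : X) (Y : ℕ → Ω → X) : ℝ≥0∞ :=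
  ∫⁻ ω, hitTime t Y ω ∂P


lemma traj_measurable' {X U W : Type*} [MeasurableSpace X] [MeasurableSpace U] [MeasurableSpace W]
    {F : X → U → W → X} {π : X → U}
    (hF : Measurable fun p : X × U × W => F p.1 p.2.1 p.2.2) (hπ : Measurable π) (x : X) :
    ∀ k, Measurable fun ω : ℕ → W => traj F π x ω k
  | 0 => measurable_const
  | k + 1 => by
    have ih := traj_measurable' hF hπ x k
    exact hF.comp (ih.prodMk ((hπ.comp ih).prodMk (measurable_pi_apply k)))

lemma traj_congr' {X U W : Type*} (F : X → U → W → X) (π : X → U) (x : X) {ω ω' : ℕ → W} :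
    ∀ k, (∀ i, i < k → ω i = ω' i) → traj F π x ω k = traj F π x ω' k
  | 0, _ => rfl
  | k + 1, h => by
    have ih := traj_congr' F π x k (fun i hi => h i (hi.trans (Nat.lt_succ_self k)))
    show F (traj F π x ω k) (π (traj F π x ω k)) (ω k) = _
    rw [ih, h k (Nat.lt_succ_self k)]
    rfl

/-- Minimum-time certainty-equivalent bound: in the unit-cost SSP with `‖V - H*‖∞ ≤ ε`,
model-mismatch constant `δ`, certainty-equivalent policy `π_CE` proper from `x`, and
`2(ε + δ) < 1`, the expected hitting time satisfies `E[τ] ≤ H*(x)/(1 - 2(ε + δ))`. -/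
theorem min_time_certainty_equivalent_bound
    {X U W Ω : Type*} [MeasurableSpace X] [MeasurableSingletonClass X]
    [MeasurableSpace U] [MeasurableSpace W] [MeasurableSpace Ω]
    (μ : Measure W) [IsProbabilityMeasure μ] (P : Measure Ω) [IsProbabilityMeasure P]
    (t : X) (u0 : U) (Ua : X → Set U) (F : X → U → W → X) (f : X → U → ℝ)
    -- SSP model: nonempty control sets, nonnegative measurable stage cost, measurable dynamics,
    -- absorbing cost-free terminal state
    (hUne : ∀ y, (Ua y).Nonempty) (hfnn : ∀ y u, 0 ≤ f y u)
    (hFmeas : Measurable fun p : X × U × W => F p.1 p.2.1 p.2.2)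
    (hfmeas : Measurable fun p : X × U => f p.1 p.2)
    (hUt : Ua t = {u0}) (hft : f t u0 = 0) (hFt : ∀ w, F t u0 w = t)
    -- unit stage cost: f ≡ 1 off the terminal state, f(t,·) = 0
    (hf1 : ∀ y u, y ≠ t → f y u = 1) (hft0 : ∀ u, f t u = 0)
    -- H* : the bounded minimum expected hitting time, H*(t) = 0, fixed point of T
    (Hstar : X → ℝ) (hHmeas : Measurable Hstar) (hHbdd : ∃ C, ∀ y, |Hstar y| ≤ C)
    (hHt : Hstar t = 0) (hHfix : ∀ y, Hstar y = bellman μ t Ua f F Hstar y)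
    (hHint : ∀ y u, Integrable (fun w => Hstar (F y u w)) μ)
    -- V : bounded surrogate with V(t)=0 and ‖V - H*‖∞ ≤ ε
    (V : X → ℝ) (hVmeas : Measurable V) (hVbdd : ∃ C, ∀ y, |V y| ≤ C) (hVt : V t = 0)
    (hVint : ∀ y u, Integrable (fun w => V (F y u w)) μ)
    (ε : ℝ) (hε : 0 ≤ ε) (happrox : ∀ y, |V y - Hstar y| ≤ ε)
    -- model-mismatch constant δ: uniform bound on the nominal-vs-expected one-step evaluation
    (wbar : W) (δ : ℝ)
    (hδ : ∀ y, y ≠ t → ∀ u ∈ Ua y, |(∫ w, V (F y u w) ∂μ) - V (F y u wbar)| ≤ δ)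
    -- the infimum defining (T V)(y) is attained at every nonterminal y
    (hTatt : ∀ y, y ≠ t → ∃ u ∈ Ua y, ∀ u' ∈ Ua y,
      f y u + ∫ w, V (F y u w) ∂μ ≤ f y u' + ∫ w, V (F y u' w) ∂μ)
    (πCE : X → U) (hπmeas : Measurable πCE)
    -- certainty-equivalent policy: greedy for the nominal one-step lookahead, minimum attained
    (hπt : πCE t = u0)
    (hce : ∀ y, y ≠ t → πCE y ∈ Ua y ∧ ∀ u ∈ Ua y,
      f y (πCE y) + V (F y (πCE y) wbar) ≤ f y u + V (F y u wbar))
    -- i.i.d. disturbance sequence with common law μ on an abstract probability space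
    (ξ : ℕ → Ω → W) (hξmeas : ∀ k, Measurable (ξ k))
    (hξindep : iIndepFun (m := fun _ => ‹MeasurableSpace W›) ξ P)
    (hξlaw : ∀ k, P.map (ξ k) = μ)
    -- properness of the closed loop from x: τ < ∞ a.s. and E[τ] < ∞
    (x : X)
    (hproper_tau : ∀ᵐ ω ∂P, hitTime t (trajOn F πCE x ξ) ω < ⊤)
    (hproper_Etau : expHit P t (trajOn F πCE x ξ) < ⊤)
    (h2εδ : 2 * (ε + δ) < 1) :
    (expHit P t (trajOn F πCE x ξ)).toReal ≤ Hstar x / (1 - 2 * (ε + δ)) := by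
  classical
  obtain ⟨C, hC⟩ := hHbdd
  set c : ℝ := 1 - 2 * (ε + δ) with hcdef
  have hc : 0 < c := by rw [hcdef]; linarith
  set Y : ℕ → Ω → X := trajOn F πCE x ξ with hYdef
  -- integral comparison helpers
  have int_le : ∀ y u, ∫ w, Hstar (F y u w) ∂μ ≤ (∫ w, V (F y u w) ∂μ) + ε := by
    intro y u
    have h : ∫ w, Hstar (F y u w) ∂μ ≤ ∫ w, (V (F y u w) + ε) ∂μ :=
      integral_mono (hHint y u) ((hVint y u).add (integrable_const ε))
        (fun w => by have := (abs_le.mp (happrox (F y u w))).1; dsimp; linarith)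
    rwa [integral_add (hVint y u) (integrable_const ε), integral_const, probReal_univ,
      one_smul] at h
  have int_le' : ∀ y u, ∫ w, V (F y u w) ∂μ ≤ (∫ w, Hstar (F y u w) ∂μ) + ε := by
    intro y u
    have h : ∫ w, V (F y u w) ∂μ ≤ ∫ w, (Hstar (F y u w) + ε) ∂μ :=
      integral_mono (hVint y u) ((hHint y u).add (integrable_const ε))
        (fun w => by have := (abs_le.mp (happrox (F y u w))).2; dsimp; linarith)
    rwa [integral_add (hHint y u) (integrable_const ε), integral_const, probReal_univ,
      one_smul] at h
  -- one-step drift at nonterminal states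
  have drift : ∀ y, y ≠ t → ∫ w, Hstar (F y (πCE y) w) ∂μ ≤ Hstar y - c := by
    intro y hy
    obtain ⟨us, husmem, husmin⟩ := hTatt y hy
    obtain ⟨hπmem, hπmin⟩ := hce y hy
    have h2 := (abs_le.mp (hδ y hy _ hπmem)).2
    have h4 := (abs_le.mp (hδ y hy us husmem)).1
    have h3 := hπmin us husmem
    rw [hf1 y (πCE y) hy, hf1 y us hy] at h3
    have h5 : ∫ w, V (F y us w) ∂μ ≤ Hstar y + ε - 1 := by
      haveI : Nonempty (Ua y) := (hUne y).to_subtype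
      have hlb : (1 + ∫ w, V (F y us w) ∂μ) - ε ≤
          ⨅ u : Ua y, (f y (u : U) + ∫ w, Hstar (F y (u : U) w) ∂μ) := by
        refine le_ciInf fun u => ?_
        have ha := husmin u u.2
        have hb := int_le' y u
        rw [hf1 y us hy] at ha
        linarith
      have hfixy : Hstar y = ⨅ u : Ua y, (f y (u : U) + ∫ w, Hstar (F y (u : U) w) ∂μ) := by
        have h := hHfix y
        rwa [bellman, if_neg hy] at h
      rw [← hfixy] at hlb
      linarith
    have h1 := int_le y (πCE y)
    rw [hcdef]
    linarith
  -- the one-step expected-value map g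
  have hker : Measurable fun p : X × W => Hstar (F p.1 (πCE p.1) p.2) :=
    hHmeas.comp (hFmeas.comp (measurable_fst.prodMk
      ((hπmeas.comp measurable_fst).prodMk measurable_snd)))
  set g : X → ℝ := fun y => ∫ w, Hstar (F y (πCE y) w) ∂μ with hgdef
  have hgmeas : StronglyMeasurable g := hker.stronglyMeasurable.integral_prod_right'
  have hgbd : ∀ y, |g y| ≤ C := by
    intro y
    calc |g y| = ‖∫ w, Hstar (F y (πCE y) w) ∂μ‖ := (Real.norm_eq_abs _).symm
      _ ≤ ∫ w, ‖Hstar (F y (πCE y) w)‖ ∂μ := norm_integral_le_integral_norm _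
      _ ≤ ∫ w, C ∂μ := integral_mono (hHint y _).norm (integrable_const C)
          (fun w => by simpa [Real.norm_eq_abs] using hC _)
      _ = C := by simp
  have hgt : g t = 0 := by
    simp only [hgdef, hπt]
    simp [hFt, hHt]
  -- trajectory measurability
  have hYmeas : ∀ k, Measurable (Y k) := by
    intro k
    have h : Y k = (fun ω' : ℕ → W => traj F πCE x ω' k) ∘ fun a i => ξ i a := rfl
    rw [h]
    exact (traj_measurable' hFmeas hπmeas x k).comp (measurable_pi_lambda _ hξmeas)
  -- independence of Y k and ξ k
  have hindep : ∀ k, IndepFun (Y k) (ξ k) P := by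
    intro k
    have hbase := hξindep.indepFun_finset (Finset.range k) {k} (by simp) hξmeas
    set φ : (↥(Finset.range k) → W) → X := fun v =>
      traj F πCE x (fun i => if h : i ∈ Finset.range k then v ⟨i, h⟩ else wbar) k with hφdef
    have hφ : Measurable φ := by
      refine (traj_measurable' hFmeas hπmeas x k).comp (measurable_pi_lambda _ fun i => ?_)
      by_cases h : i ∈ Finset.range k
      · simp only [h, dif_pos]
        exact measurable_pi_apply _
      · simp only [h, dif_neg, not_false_iff]
        exact measurable_const
    set ψ : (↥({k} : Finset ℕ) → W) → W := fun v => v ⟨k, Finset.mem_singleton_self k⟩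
      with hψdef
    have hψ : Measurable ψ := measurable_pi_apply _
    have hcomp := hbase.comp hφ hψ
    have h1 : Y k = φ ∘ fun a (i : ↥(Finset.range k)) => ξ (i : ℕ) a := by
      funext a
      exact traj_congr' F πCE x k fun i hi => by
        rw [dif_pos (Finset.mem_range.mpr hi)]
    have h2 : ξ k = ψ ∘ fun a (i : ↥({k} : Finset ℕ)) => ξ (i : ℕ) a := rfl
    rw [h1, h2]
    exact hcomp
  -- key identity: E[H*(Y_{k+1})] = E[g(Y_k)]
  have hstep_id : ∀ k, ∫ ω, Hstar (Y (k + 1) ω) ∂P = ∫ ω, g (Y k ω) ∂P := by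
    intro k
    have hYk := hYmeas k
    haveI : IsProbabilityMeasure (P.map (Y k)) := Measure.isProbabilityMeasure_map hYk.aemeasurable
    have hmap : P.map (fun ω => (Y k ω, ξ k ω)) = (P.map (Y k)).prod μ := by
      rw [← hξlaw k]
      exact (indepFun_iff_map_prod_eq_prod_map_map hYk.aemeasurable
        (hξmeas k).aemeasurable).mp (hindep k)
    have hint : Integrable (fun p : X × W => Hstar (F p.1 (πCE p.1) p.2))
        ((P.map (Y k)).prod μ) :=
      (integrable_const C).mono' hker.aestronglyMeasurable
        (ae_of_all _ fun p => by simpa [Real.norm_eq_abs] using hC _)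
    calc ∫ ω, Hstar (Y (k + 1) ω) ∂P
        = ∫ ω, (fun p : X × W => Hstar (F p.1 (πCE p.1) p.2)) (Y k ω, ξ k ω) ∂P := rfl
      _ = ∫ p, (fun p : X × W => Hstar (F p.1 (πCE p.1) p.2)) p
            ∂(P.map fun ω => (Y k ω, ξ k ω)) :=
          (integral_map (hYk.prodMk (hξmeas k)).aemeasurable
            hker.stronglyMeasurable.aestronglyMeasurable).symm
      _ = ∫ p, (fun p : X × W => Hstar (F p.1 (πCE p.1) p.2)) p
            ∂((P.map (Y k)).prod μ) := by rw [hmap]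
      _ = ∫ y, ∫ w, Hstar (F y (πCE y) w) ∂μ ∂(P.map (Y k)) := integral_prod _ hint
      _ = ∫ ω, g (Y k ω) ∂P := integral_map hYk.aemeasurable hgmeas.aestronglyMeasurable
  -- integrability
  have hintH : ∀ k, Integrable (fun ω => Hstar (Y k ω)) P := fun k =>
    (integrable_const C).mono' (hHmeas.comp (hYmeas k)).aestronglyMeasurable
      (ae_of_all _ fun ω => by simpa [Real.norm_eq_abs] using hC _)
  have hintg : ∀ k, Integrable (fun ω => g (Y k ω)) P := fun k =>
    (integrable_const C).mono' (hgmeas.measurable.comp (hYmeas k)).aestronglyMeasurable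
      (ae_of_all _ fun ω => by simpa [Real.norm_eq_abs] using hgbd _)
  -- survival sets
  set s : ℕ → Set Ω := fun k => {ω | Y k ω ≠ t} with hsdef
  have hsmeas : ∀ k, MeasurableSet (s k) :=
    fun k => ((hYmeas k) (measurableSet_singleton t)).compl
  -- one-step inequality in expectation
  have hstep : ∀ k, ∫ ω, Hstar (Y (k + 1) ω) ∂P ≤
      (∫ ω, Hstar (Y k ω) ∂P) - c * (P (s k)).toReal := by
    intro k
    rw [hstep_id k]
    have hptw : ∀ ω, g (Y k ω) ≤
        Hstar (Y k ω) - Set.indicator (s k) (fun _ => c) ω := by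
      intro ω
      by_cases h : Y k ω = t
      · rw [h, hgt, hHt, Set.indicator_of_notMem (by simp [hsdef, h])]
        simp
      · rw [Set.indicator_of_mem (show ω ∈ s k from h)]
        exact drift (Y k ω) h
    have hmono : ∫ ω, g (Y k ω) ∂P ≤
        ∫ ω, (Hstar (Y k ω) - Set.indicator (s k) (fun _ => c) ω) ∂P :=
      integral_mono (hintg k)
        ((hintH k).sub ((integrable_const c).indicator (hsmeas k))) hptw
    rw [integral_sub (hintH k) ((integrable_const c).indicator (hsmeas k)),
      integral_indicator_const _ (hsmeas k), smul_eq_mul, measureReal_def] at hmono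
    rw [mul_comm c]
    linarith
  -- telescoping
  have htel : ∀ n, c * ∑ k ∈ Finset.range n, (P (s k)).toReal ≤
      Hstar x - ∫ ω, Hstar (Y n ω) ∂P := by
    intro n
    induction n with
    | zero =>
      have h0 : ∫ ω, Hstar (Y 0 ω) ∂P = Hstar x := by
        have h : (fun ω => Hstar (Y 0 ω)) = fun _ => Hstar x := rfl
        rw [h, integral_const, probReal_univ, one_smul]
      simp [h0]
    | succ n ih =>
      rw [Finset.sum_range_succ, mul_add]
      have := hstep n
      linarith
  -- absorbing terminal state
  have habs : ∀ ω k m, k ≤ m → Y k ω = t → Y m ω = t := by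
    intro ω k m hkm hk
    induction m, hkm using Nat.le_induction with
    | base => exact hk
    | succ m _ ih =>
      show F (Y m ω) (πCE (Y m ω)) (ξ m ω) = t
      rw [ih, hπt]
      exact hFt _
  -- E[H*(Y_n)] → 0
  have he_tendsto : Tendsto (fun n => ∫ ω, Hstar (Y n ω) ∂P) atTop (nhds 0) := by
    have hconv : ∀ᵐ ω ∂P, Tendsto (fun n => Hstar (Y n ω)) atTop (nhds ((fun _ : Ω => (0:ℝ)) ω)) := ?conv
    case _ =>
      have := tendsto_integral_of_dominated_convergence (μ := P)
        (F := fun n ω => Hstar (Y n ω)) (f := fun _ : Ω => (0:ℝ)) (fun _ => C)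
        (fun n => (hHmeas.comp (hYmeas n)).aestronglyMeasurable)
        (integrable_const C)
        (fun n => ae_of_all _ fun ω => by simpa [Real.norm_eq_abs] using hC _) hconv
      simpa using this
    case conv =>
    filter_upwards [hproper_tau] with ω hω
    have hex : ∃ k, Y k ω = t := by
      by_contra hne
      push_neg at hne
      have htop : hitTime t Y ω = ⊤ :=
        le_antisymm le_top (le_iInf fun k => le_iInf fun hk => (hne k hk).elim)
      rw [htop] at hω
      exact lt_irrefl _ hω
    obtain ⟨N, hN⟩ := hex
    refine Tendsto.congr' ?_ tendsto_const_nhds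
    filter_upwards [eventually_ge_atTop N] with n hn
    exact (by rw [habs ω N n hn hN, hHt] : Hstar (Y n ω) = 0).symm
  -- hitting time as layered sum
  have hhit_eq : ∀ ω, hitTime t Y ω = ∑' k : ℕ, Set.indicator (s k) (1 : Ω → ℝ≥0∞) ω := by
    intro ω
    by_cases hfin : ∃ k, Y k ω = t
    · have hn : Y (Nat.find hfin) ω = t := Nat.find_spec hfin
      have hτ : hitTime t Y ω = ((Nat.find hfin : ℕ) : ℝ≥0∞) :=
        le_antisymm (iInf₂_le (f := fun (k : ℕ) (_ : Y k ω = t) => (k : ℝ≥0∞)) (Nat.find hfin) hn)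
          (le_iInf₂ fun j hj => by exact_mod_cast Nat.find_min' hfin hj)
      rw [hτ, tsum_eq_sum (s := Finset.range (Nat.find hfin))
        (fun k hk => Set.indicator_of_notMem
          (show ω ∉ s k from fun hmem => hmem (habs ω (Nat.find hfin) k
            (Nat.le_of_not_lt fun hl => hk (Finset.mem_range.mpr hl)) hn)) _)]
      rw [Finset.sum_congr rfl fun k hk => Set.indicator_of_mem
        (show ω ∈ s k from fun heq => Nat.find_min hfin (Finset.mem_range.mp hk) heq)
        (1 : Ω → ℝ≥0∞)]
      simp
    · push_neg at hfin
      have hτ : hitTime t Y ω = ⊤ :=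
        le_antisymm le_top (le_iInf fun k => le_iInf fun hk => (hfin k hk).elim)
      rw [hτ, tsum_congr (fun k => Set.indicator_of_mem (show ω ∈ s k from hfin k) (1 : Ω → ℝ≥0∞))]
      exact (ENNReal.tsum_const_eq_top_of_ne_zero one_ne_zero).symm
  -- expected hitting time as a series
  have hexp_eq : expHit P t Y = ∑' k, P (s k) := by
    rw [expHit, lintegral_congr hhit_eq,
      lintegral_tsum fun k => (measurable_one.indicator (hsmeas k)).aemeasurable]
    exact tsum_congr fun k => lintegral_indicator_one (hsmeas k)
  -- conclude
  have hfin' : ∑' k, P (s k) ≠ ⊤ := by rw [← hexp_eq]; exact hproper_Etau.ne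
  have hsummable : Summable fun k => (P (s k)).toReal := ENNReal.summable_toReal hfin'
  have htoReal : (expHit P t Y).toReal = ∑' k, (P (s k)).toReal := by
    rw [hexp_eq, ENNReal.tsum_toReal_eq fun k => measure_ne_top P _]
  have hbound : c * ∑' k, (P (s k)).toReal ≤ Hstar x := by
    have h1 : Tendsto (fun n => c * ∑ k ∈ Finset.range n, (P (s k)).toReal) atTop
        (nhds (c * ∑' k, (P (s k)).toReal)) :=
      (hsummable.hasSum.tendsto_sum_nat).const_mul c
    have h2 : Tendsto (fun n => Hstar x - ∫ ω, Hstar (Y n ω) ∂P) atTop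
        (nhds (Hstar x - 0)) := tendsto_const_nhds.sub he_tendsto
    have := le_of_tendsto_of_tendsto' h1 h2 htel
    simpa using this
  rw [htoReal, le_div_iff₀ hc]
  calc (∑' k, (P (s k)).toReal) * c = c * ∑' k, (P (s k)).toReal := mul_comm _ _
    _ ≤ Hstar x := hbound
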